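/- Let f ∈ Den[a,b], let F(x) = ∫_a^x f (the indefinite Denjoy integral), and let K ⊆ [a,b] be closed. Then (i) D_f^∞(K) = ∅, (ii) D_F^∞(K) = ∅, and (iii) D_{f,F}^∞(K) = ∅. -/

import Mathlib

open MeasureTheory Set Filter
open Topology

noncomputable section

attribute [local instance] Classical.propDecidable

/-- The oscillation `ω(F, J)` of `F` on the set `J`. -/
def osc (F : ℝ → ℝ) (J : Set ℝ) : ℝ :=
  sSup {d : ℝ | ∃ x ∈ J, ∃ y ∈ J, d = |F x - F y|}

/-- `D` is a `K`-edged pre-partition of `[a,b]`: a finite nonempty collection of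
pairwise non-overlapping closed subintervals of `[a,b]` whose endpoints lie in `K`. -/
def IsPrePartition (a b : ℝ) (K : Set ℝ) (D : Finset (ℝ × ℝ)) : Prop :=
  D.Nonempty ∧
  (∀ p ∈ D, p.1 ≤ p.2 ∧ p.1 ∈ K ∧ p.2 ∈ K ∧ Icc p.1 p.2 ⊆ Icc a b) ∧
  (D : Set (ℝ × ℝ)).Pairwise fun p q => p.2 ≤ q.1 ∨ q.2 ≤ p.1

/-- `F ∈ AC_*(K)`: absolute continuity in the restricted sense on `K`. -/
def ACStar (a b : ℝ) (F : ℝ → ℝ) (K : Set ℝ) : Prop :=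
  ∀ ε > (0:ℝ), ∃ δ > (0:ℝ), ∀ D : Finset (ℝ × ℝ), IsPrePartition a b K D →
    (∑ p ∈ D, (p.2 - p.1)) < δ → (∑ p ∈ D, osc F (Icc p.1 p.2)) < ε

/-- `F ∈ ACG_*(K)`: `K` is a countable union of closed sets `Kₙ ⊆ [a,b]` with `F ∈ AC_*(Kₙ)`. -/
def ACGStar (a b : ℝ) (F : ℝ → ℝ) (K : Set ℝ) : Prop :=
  ∃ C : ℕ → Set ℝ, (∀ n, IsClosed (C n) ∧ C n ⊆ Icc a b ∧ ACStar a b F (C n)) ∧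
    K = ⋃ n, C n

/-- `F` is the indefinite Denjoy integral of `f` on `[a,b]`:
`F` is continuous on `[a,b]`, `F(a) = 0`, `F ∈ ACG_*([a,b])`, and `F' = f` a.e. on `[a,b]`. -/
def HasDenjoyIntegralFn (a b : ℝ) (f F : ℝ → ℝ) : Prop :=
  ContinuousOn F (Icc a b) ∧ F a = 0 ∧ ACGStar a b F (Icc a b) ∧
    ∀ᵐ x ∂(volume.restrict (Icc a b)), HasDerivAt F (f x) x

/-- `f ∈ Den[a,b]`: `f` is Denjoy integrable on `[a,b]`. -/
def DenjoyIntegrable (a b : ℝ) (f : ℝ → ℝ) : Prop :=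
  ∃ F : ℝ → ℝ, HasDenjoyIntegralFn a b f F

/-- The Denjoy integral `∫_a^b f` (junk value `0` if `f` is not Denjoy integrable). -/
def denjoyIntegral (a b : ℝ) (f : ℝ → ℝ) : ℝ :=
  if h : DenjoyIntegrable a b f then Classical.choose h b else 0

/-- The derivative `D_f(K)`: points of `K` at which `f` is not locally Lebesgue integrable
relative to `K`. -/
def Df (f : ℝ → ℝ) (K : Set ℝ) : Set ℝ :=
  {x ∈ K | ∀ c d : ℝ, c < x → x < d → ¬ IntegrableOn f (Icc c d ∩ K) volume}

/-- The derivative `D_F(K)`: points of `K` at which `F` is not locally `AC_*` relative to `K`. -/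
def DF (a b : ℝ) (F : ℝ → ℝ) (K : Set ℝ) : Set ℝ :=
  {x ∈ K | ∀ c d : ℝ, c < x → x < d → ¬ ACStar a b F (Icc c d ∩ K)}

/-- The derivative `D_{f,F}(K) = D_f(K) ∪ D_F(K)`. -/
def DfF (a b : ℝ) (f F : ℝ → ℝ) (K : Set ℝ) : Set ℝ := Df f K ∪ DF a b F K

/-- Transfinite iterates of a derivative operation on sets:
`D⁰(K) = K`, `D^(α+1)(K) = D(D^α(K))`, and `D^α(K) = ⋂_(β<α) D^β(K)` for limit `α`. -/
def derivIter (D : Set ℝ → Set ℝ) (K : Set ℝ) (α : Ordinal.{0}) : Set ℝ :=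
  Ordinal.limitRecOn α K (fun _ ih => D ih) (fun o _ ih => ⋂ β : Iio o, ih β.1 β.2)

/-- `D^∞(K) = ⋂_(α<ω₁) D^α(K)`. -/
def derivInfty (D : Set ℝ → Set ℝ) (K : Set ℝ) : Set ℝ :=
  ⋂ (α : Ordinal.{0}) (_ : α.card ≤ Cardinal.aleph0), derivIter D K α

lemma osc_nonneg (F : ℝ → ℝ) (J : Set ℝ) : 0 ≤ osc F J := by
  apply Real.sSup_nonneg
  rintro x ⟨u, hu, v, hv, rfl⟩; exact abs_nonneg _

lemma osc_singleton (F : ℝ → ℝ) (x : ℝ) : osc F (Icc x x) = 0 := by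
  unfold osc
  have : {d : ℝ | ∃ u ∈ Icc x x, ∃ v ∈ Icc x x, d = |F u - F v|} = {0} := by
    ext d
    simp [Icc_self]
  rw [this, csSup_singleton]

lemma oscSet_bddAbove {a b C : ℝ} {F : ℝ → ℝ} (hC : ∀ t ∈ Icc a b, |F t| ≤ C)
    {J : Set ℝ} (hJ : J ⊆ Icc a b) :
    BddAbove {d : ℝ | ∃ x ∈ J, ∃ y ∈ J, d = |F x - F y|} := by
  refine ⟨2*C, ?_⟩
  rintro d ⟨u, hu, v, hv, rfl⟩
  calc |F u - F v| ≤ |F u| + |F v| := abs_sub _ _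
    _ ≤ C + C := add_le_add (hC u (hJ hu)) (hC v (hJ hv))
    _ = 2*C := by ring

lemma abs_sub_le_osc {a b C : ℝ} {F : ℝ → ℝ} (hC : ∀ t ∈ Icc a b, |F t| ≤ C)
    {J : Set ℝ} (hJ : J ⊆ Icc a b) {x y : ℝ} (hx : x ∈ J) (hy : y ∈ J) :
    |F x - F y| ≤ osc F J :=
  le_csSup (oscSet_bddAbove hC hJ) ⟨x, hx, y, hy, rfl⟩

lemma osc_le_two_mul {a b C : ℝ} {F : ℝ → ℝ} (hC : ∀ t ∈ Icc a b, |F t| ≤ C) (hC0 : 0 ≤ C)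
    {J : Set ℝ} (hJ : J ⊆ Icc a b) : osc F J ≤ 2*C := by
  apply Real.sSup_le _ (by linarith)
  rintro d ⟨u, hu, v, hv, rfl⟩
  calc |F u - F v| ≤ |F u| + |F v| := abs_sub _ _
    _ ≤ C + C := add_le_add (hC u (hJ hu)) (hC v (hJ hv))
    _ = 2*C := by ring

lemma osc_mono {a b C : ℝ} {F : ℝ → ℝ} (hC : ∀ t ∈ Icc a b, |F t| ≤ C)
    {J J' : Set ℝ} (hJ' : J' ⊆ Icc a b) (hsub : J ⊆ J') : osc F J ≤ osc F J' := by
  apply Real.sSup_le _ (osc_nonneg F J')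
  rintro d ⟨u, hu, v, hv, rfl⟩
  exact abs_sub_le_osc hC hJ' (hsub hu) (hsub hv)

lemma sum_length_le {D : Finset (ℝ × ℝ)} {u v : ℝ} (huv : u ≤ v)
    (h1 : ∀ p ∈ D, u ≤ p.1 ∧ p.1 ≤ p.2 ∧ p.2 ≤ v)
    (h2 : (D : Set (ℝ × ℝ)).Pairwise fun p q => p.2 ≤ q.1 ∨ q.2 ≤ p.1) :
    ∑ p ∈ D, (p.2 - p.1) ≤ v - u := by
  have hdisj : (D : Set (ℝ × ℝ)).PairwiseDisjoint (fun p => Ioo p.1 p.2) := by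
    intro p hp q hq hne
    have hd : Disjoint (Ioo p.1 p.2) (Ioo q.1 q.2) := by
      rcases h2 hp hq hne with h | h
      · rw [Set.disjoint_left]
        rintro x ⟨hx1, hx2⟩ ⟨hx3, hx4⟩; linarith
      · rw [Set.disjoint_left]
        rintro x ⟨hx1, hx2⟩ ⟨hx3, hx4⟩; linarith
    exact hd
  have key : ENNReal.ofReal (∑ p ∈ D, (p.2 - p.1)) ≤ ENNReal.ofReal (v - u) := by
    rw [ENNReal.ofReal_sum_of_nonneg (fun p hp => by linarith [(h1 p hp).2.1])]
    have heq : ∀ p ∈ D, ENNReal.ofReal (p.2 - p.1) = volume (Ioo p.1 p.2) :=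
      fun p hp => Real.volume_Ioo.symm
    rw [Finset.sum_congr rfl heq,
      ← measure_biUnion_finset hdisj (fun p _ => measurableSet_Ioo)]
    calc volume (⋃ p ∈ D, Ioo p.1 p.2) ≤ volume (Icc u v) := by
          apply measure_mono
          rintro x hx
          simp only [mem_iUnion] at hx
          obtain ⟨p, hp, hx1, hx2⟩ := hx
          obtain ⟨h3, _, h5⟩ := h1 p hp
          exact ⟨by linarith, by linarith⟩
      _ = ENNReal.ofReal (v - u) := Real.volume_Icc
  exact (ENNReal.ofReal_le_ofReal_iff (by linarith)).mp key

lemma exists_bound_of_acstar {a b C : ℝ} (hab : a ≤ b) {F : ℝ → ℝ}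
    (hC : ∀ t ∈ Icc a b, |F t| ≤ C) (hC0 : 0 ≤ C)
    {E : Set ℝ} (hAC : ACStar a b F E) :
    ∃ M : ℝ, 0 ≤ M ∧ ∀ D : Finset (ℝ × ℝ), IsPrePartition a b E D →
      ∑ p ∈ D, osc F (Icc p.1 p.2) ≤ M := by
  classical
  obtain ⟨δ, hδ, hδ1⟩ := hAC 1 one_pos
  set w := δ/2 with hw
  have hw0 : 0 < w := by positivity
  set N : ℕ := ⌊(b-a)/w⌋₊ + 1 with hN
  refine ⟨N * (1 + 2*C), by positivity, ?_⟩
  intro D hD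
  obtain ⟨hDne, hDmem, hDpw⟩ := hD
  have hendpts : ∀ p ∈ D, a ≤ p.1 ∧ p.1 ≤ b ∧ a ≤ p.2 ∧ p.2 ≤ b := by
    intro p hp
    obtain ⟨h1, _, _, h4⟩ := hDmem p hp
    have h5 := h4 (left_mem_Icc.mpr h1)
    have h6 := h4 (right_mem_Icc.mpr h1)
    exact ⟨h5.1, h5.2, h6.1, h6.2⟩
  set cls : ℝ × ℝ → ℕ := fun p => ⌊(p.1 - a)/w⌋₊ with hcls
  have hclslt : ∀ p ∈ D, cls p ∈ Finset.range N := by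
    intro p hp
    obtain ⟨h1, h2, _, _⟩ := hendpts p hp
    simp only [Finset.mem_range, hN]
    apply Nat.lt_succ_of_le
    apply Nat.floor_le_floor
    exact (div_le_div_iff_of_pos_right hw0).mpr (by linarith)
  have hclsprop : ∀ p ∈ D, a + (cls p : ℝ)*w ≤ p.1 ∧ p.1 < a + ((cls p : ℝ)+1)*w := by
    intro p hp
    obtain ⟨h1, _, _, _⟩ := hendpts p hp
    have h0 : 0 ≤ (p.1 - a)/w := div_nonneg (by linarith) hw0.le
    have hfl : ((cls p : ℝ)) ≤ (p.1 - a)/w := Nat.floor_le h0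
    have hfu : (p.1 - a)/w < (cls p : ℝ) + 1 := Nat.lt_floor_add_one _
    constructor
    · have := (le_div_iff₀ hw0).mp hfl; linarith
    · have := (div_lt_iff₀ hw0).mp hfu; linarith
  rw [← Finset.sum_fiberwise_of_maps_to hclslt]
  have hbound : ∀ i ∈ Finset.range N,
      ∑ p ∈ D.filter (fun p => cls p = i), osc F (Icc p.1 p.2) ≤ 1 + 2*C := by
    intro i _
    set Di := D.filter (fun p => cls p = i) with hDi
    have hDiD : ∀ p ∈ Di, p ∈ D ∧ a + (i:ℝ)*w ≤ p.1 ∧ p.1 < a + ((i:ℝ)+1)*w := by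
      intro p hp
      obtain ⟨hpD, hpc⟩ := Finset.mem_filter.mp hp
      obtain ⟨hl, hu⟩ := hclsprop p hpD
      rw [hpc] at hl hu
      exact ⟨hpD, hl, hu⟩
    set inner := Di.filter (fun p => p.2 < a + ((i:ℝ)+1)*w) with hinner
    set outer := Di.filter (fun p => ¬ p.2 < a + ((i:ℝ)+1)*w) with houter
    have hsplit : Di = inner ∪ outer := (Finset.filter_union_filter_not_eq _ _).symm
    rw [hsplit, Finset.sum_union (Finset.disjoint_filter_filter_not _ _ _)]
    have hinner1 : ∑ p ∈ inner, osc F (Icc p.1 p.2) ≤ 1 := by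
      by_cases hi : inner.Nonempty
      · have hsub : inner ⊆ D := fun p hp =>
          (hDiD p (Finset.mem_filter.mp hp).1).1
        have hpre : IsPrePartition a b E inner :=
          ⟨hi, fun p hp => hDmem p (hsub hp), hDpw.mono (by exact_mod_cast Finset.coe_subset.mpr hsub)⟩
        apply le_of_lt (hδ1 inner hpre ?_)
        have hlen : ∑ p ∈ inner, (p.2 - p.1) ≤ (a + ((i:ℝ)+1)*w) - (a + (i:ℝ)*w) := by
          apply sum_length_le (by nlinarith)
          · intro p hp
            obtain ⟨hpD, hl, _⟩ := hDiD p (Finset.mem_filter.mp hp).1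
            have hq := (Finset.mem_filter.mp hp).2
            exact ⟨hl, (hDmem p hpD).1, by linarith [hq]⟩
          · exact hDpw.mono (by exact_mod_cast Finset.coe_subset.mpr hsub)
        have : (a + ((i:ℝ)+1)*w) - (a + (i:ℝ)*w) = w := by ring
        rw [this] at hlen
        have hwd : w < δ := by rw [hw]; linarith
        linarith
      · rw [Finset.not_nonempty_iff_eq_empty.mp hi, Finset.sum_empty]; norm_num
    have houter1 : ∑ p ∈ outer, osc F (Icc p.1 p.2) ≤ 2*C := by
      have hcard : outer.card ≤ 1 := by
        rw [Finset.card_le_one]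
        intro p hp q hq
        by_contra hne
        obtain ⟨hpD, hpl, hpu⟩ := hDiD p (Finset.mem_filter.mp hp).1
        obtain ⟨hqD, hql, hqu⟩ := hDiD q (Finset.mem_filter.mp hq).1
        have hp2 := (Finset.mem_filter.mp hp).2
        have hq2 := (Finset.mem_filter.mp hq).2
        simp only [not_lt] at hp2 hq2
        rcases hDpw (Finset.mem_coe.mpr hpD) (Finset.mem_coe.mpr hqD) hne with h | h
        · linarith
        · linarith
      rcases Finset.subset_singleton_iff.mp
          (Finset.card_le_one_iff_subset_singleton.mp hcard).choose_spec with h | h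
      · rw [h, Finset.sum_empty]; linarith
      · rw [h, Finset.sum_singleton]
        set p := (Finset.card_le_one_iff_subset_singleton.mp hcard).choose
        have hpD : p ∈ D := by
          have : p ∈ outer := by rw [h]; exact Finset.mem_singleton_self _
          exact (hDiD p (Finset.mem_filter.mp this).1).1
        exact osc_le_two_mul hC hC0 (hDmem p hpD).2.2.2
    linarith
  calc ∑ i ∈ Finset.range N, ∑ p ∈ D.filter (fun p => cls p = i), osc F (Icc p.1 p.2)
      ≤ ∑ _i ∈ Finset.range N, (1 + 2*C) := Finset.sum_le_sum hbound
    _ = N * (1 + 2*C) := by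
        rw [Finset.sum_const, Finset.card_range, nsmul_eq_mul]

lemma sum_osc_le_of_family {a b M : ℝ} {F : ℝ → ℝ} {E : Set ℝ} (hM0 : 0 ≤ M)
    (hM : ∀ D : Finset (ℝ × ℝ), IsPrePartition a b E D →
      ∑ p ∈ D, osc F (Icc p.1 p.2) ≤ M)
    {s : Finset ℕ} {P Q : ℕ → ℝ}
    (hmem : ∀ j ∈ s, P j ≤ Q j ∧ P j ∈ E ∧ Q j ∈ E ∧ Icc (P j) (Q j) ⊆ Icc a b)
    (hpw : ∀ j ∈ s, ∀ k ∈ s, j ≠ k → Q j ≤ P k ∨ Q k ≤ P j) :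
    ∑ j ∈ s, osc F (Icc (P j) (Q j)) ≤ M := by
  classical
  set s' := s.filter (fun j => P j < Q j) with hs'
  have hzero : ∀ j ∈ s, j ∉ s' → osc F (Icc (P j) (Q j)) = 0 := by
    intro j hj hj'
    have hPQ : P j = Q j := by
      have := (hmem j hj).1
      by_contra hne
      exact hj' (Finset.mem_filter.mpr ⟨hj, lt_of_le_of_ne this hne⟩)
    rw [hPQ]
    exact osc_singleton F (Q j)
  rw [← Finset.sum_subset (Finset.filter_subset _ s) hzero]
  by_cases hne : s'.Nonempty
  · set D := s'.image (fun j => (P j, Q j)) with hD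
    have hmem' : ∀ j ∈ s', j ∈ s ∧ P j < Q j := fun j hj =>
      ⟨(Finset.mem_filter.mp hj).1, (Finset.mem_filter.mp hj).2⟩
    have hinj : ∀ j ∈ s', ∀ k ∈ s', (P j, Q j) = (P k, Q k) → j = k := by
      intro j hj k hk he
      by_contra hne2
      obtain ⟨hjs, hjlt⟩ := hmem' j hj
      obtain ⟨hks, hklt⟩ := hmem' k hk
      have h1 : P j = P k := congrArg Prod.fst he
      have h2 : Q j = Q k := congrArg Prod.snd he
      rcases hpw j hjs k hks hne2 with h | h
      · nlinarith [h1, h2]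
      · nlinarith [h1, h2]
    have himg : ∑ p ∈ D, osc F (Icc p.1 p.2) = ∑ j ∈ s', osc F (Icc (P j) (Q j)) :=
      Finset.sum_image hinj
    rw [← himg]
    apply hM
    refine ⟨hne.image _, ?_, ?_⟩
    · intro p hp
      obtain ⟨j, hj, rfl⟩ := Finset.mem_image.mp hp
      exact hmem j (hmem' j hj).1
    · intro p hp q hq hpq
      simp only [hD, Finset.coe_image, Set.mem_image, Finset.mem_coe] at hp hq
      obtain ⟨j, hj, rfl⟩ := hp
      obtain ⟨k, hk, rfl⟩ := hq
      have hjk : j ≠ k := fun h => hpq (by rw [h])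
      exact hpw j (hmem' j hj).1 k (hmem' k hk).1 hjk
  · rw [← hs', Finset.not_nonempty_iff_eq_empty.mp hne, Finset.sum_empty]
    exact hM0

lemma integrableOn_of_acstar {a b : ℝ} (hab : a ≤ b) {F f : ℝ → ℝ}
    (hFc : ContinuousOn F (Icc a b)) {E : Set ℝ} (hEcl : IsClosed E) (hEne : E.Nonempty)
    (hEsub : E ⊆ Icc a b) (hAC : ACStar a b F E)
    (hderiv : ∀ᵐ x ∂(volume.restrict E), HasDerivAt F (f x) x) :
    IntegrableOn f E volume := by
  classical
  have hEm : MeasurableSet E := hEcl.measurableSet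
  -- measurability of f
  have hfm : AEStronglyMeasurable f (volume.restrict E) := by
    have h1 : f =ᵐ[volume.restrict E] deriv F := by
      filter_upwards [hderiv] with x hx
      exact hx.deriv.symm
    exact ((measurable_deriv F).aestronglyMeasurable).congr h1.symm
  -- bound on F
  obtain ⟨C, hCn⟩ := isCompact_Icc.exists_bound_of_continuousOn hFc
  have hC' : ∀ t ∈ Icc a b, |F t| ≤ C := by
    intro t ht; simpa [Real.norm_eq_abs] using hCn t ht
  have hC0 : 0 ≤ C := le_trans (abs_nonneg _) (hC' a (left_mem_Icc.mpr hab))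
  obtain ⟨M, hM0, hM⟩ := exists_bound_of_acstar hab hC' hC0 hAC
  -- inf and sup of E
  set m := sInf E with hm
  set Mx := sSup E with hMx
  have hbdd : BddAbove E := ⟨b, fun x hx => (hEsub hx).2⟩
  have hbddb : BddBelow E := ⟨a, fun x hx => (hEsub hx).1⟩
  have hmE : m ∈ E := hEcl.csInf_mem hEne hbddb
  have hMxE : Mx ∈ E := hEcl.csSup_mem hEne hbdd
  have hmle : ∀ x ∈ E, m ≤ x := fun x hx => csInf_le hbddb hx
  have hxleM : ∀ x ∈ E, x ≤ Mx := fun x hx => le_csSup hbdd hx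
  -- the clamped version of F
  set G : ℝ → ℝ := F ∘ (fun t => max a (min t b)) with hGdef
  have hclamp : ∀ t : ℝ, max a (min t b) ∈ Icc a b :=
    fun t => ⟨le_max_left _ _, max_le hab (min_le_right _ _)⟩
  have hGc : Continuous G :=
    hFc.comp_continuous (continuous_const.max (continuous_id.min continuous_const)) hclamp
  have hGF : ∀ t ∈ Icc a b, G t = F t := by
    intro t ht
    simp only [hGdef, Function.comp_apply, min_eq_left ht.2, max_eq_right ht.1]
  have hGb : ∀ t, |G t| ≤ C := fun t => hC' _ (hclamp t)
  -- the comparison functions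
  set g : ℕ → ℝ → ℝ := fun n x => ((n:ℝ)+1) * |G (x + 1/((n:ℝ)+1)) - G x| with hgdef
  have hgmeas : ∀ n, Measurable (fun x => ENNReal.ofReal (g n x)) := by
    intro n
    have hco : Continuous (fun x : ℝ => |G (x + 1/((n:ℝ)+1)) - G x|) :=
      ((hGc.comp (continuous_add_right _)).sub hGc).abs
    exact ENNReal.measurable_ofReal.comp (continuous_const.mul hco).measurable
  have hgnn : ∀ n x, 0 ≤ g n x := by
    intro n x
    apply mul_nonneg (by positivity) (abs_nonneg _)
  -- pointwise liminf bound
  have hpt : ∀ᵐ x ∂(volume.restrict E),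
      (‖f x‖₊ : ENNReal) ≤ liminf (fun n => ENNReal.ofReal (g n x)) atTop := by
    have hbnull : ∀ᵐ x ∂(volume.restrict E), x ≠ b := by
      refine ae_iff.mpr ?_
      have hset : {x : ℝ | ¬ x ≠ b} = {b} := by ext x; simp
      rw [hset]
      exact le_antisymm ((Measure.restrict_apply_le _ _).trans (by simp)) zero_le
    filter_upwards [hderiv, hbnull, ae_restrict_mem hEm] with x hx hxb hxE
    have hxab : x ∈ Icc a b := hEsub hxE
    have hxb' : x < b := lt_of_le_of_ne hxab.2 hxb
    have hseq : Tendsto (fun n : ℕ => x + 1/((n:ℝ)+1)) atTop (𝓝 x) := by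
      have h0 := tendsto_one_div_add_atTop_nhds_zero_nat (𝕜 := ℝ)
      have := tendsto_const_nhds (x := x) (f := atTop (α := ℕ)) |>.add h0
      simpa using this
    have hslope := hasDerivAt_iff_tendsto_slope.mp hx
    have hmemne : ∀ n : ℕ, x + 1/((n:ℝ)+1) ∈ ({x}ᶜ : Set ℝ) := by
      intro n
      simp only [mem_compl_iff, mem_singleton_iff]
      have : (0:ℝ) < 1/((n:ℝ)+1) := by positivity
      exact (lt_add_of_pos_right x this).ne'
    have htend : Tendsto (fun n : ℕ => slope F x (x + 1/((n:ℝ)+1))) atTop (𝓝 (f x)) :=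
      hslope.comp (tendsto_nhdsWithin_iff.mpr ⟨hseq, Eventually.of_forall hmemne⟩)
    have htabs : Tendsto (fun n : ℕ => |slope F x (x + 1/((n:ℝ)+1))|) atTop (𝓝 |f x|) :=
      htend.abs
    have hev : ∀ᶠ n : ℕ in atTop, |slope F x (x + 1/((n:ℝ)+1))| = g n x := by
      have hevb : ∀ᶠ n : ℕ in atTop, x + 1/((n:ℝ)+1) ≤ b :=
        (hseq.eventually_lt_const hxb').mono fun n h => le_of_lt h
      filter_upwards [hevb] with n hn
      have h1n : (0:ℝ) < 1/((n:ℝ)+1) := by positivity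
      have hy : x + 1/((n:ℝ)+1) ∈ Icc a b := ⟨by linarith [hxab.1], hn⟩
      rw [slope_def_field, show x + 1/((n:ℝ)+1) - x = 1/((n:ℝ)+1) by ring,
        abs_div, abs_of_pos h1n]
      rw [hgdef]
      simp only []
      rw [hGF _ hy, hGF _ hxab]
      rw [div_eq_mul_inv, one_div, inv_inv, mul_comm]
    have htg : Tendsto (fun n : ℕ => g n x) atTop (𝓝 |f x|) := htabs.congr' hev
    have htg' : Tendsto (fun n : ℕ => ENNReal.ofReal (g n x)) atTop
        (𝓝 (ENNReal.ofReal |f x|)) :=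
      (ENNReal.continuous_ofReal.tendsto _).comp htg
    rw [htg'.liminf_eq, ← enorm_eq_nnnorm, Real.enorm_eq_ofReal_abs]
  -- Fatou
  have hfatou : ∫⁻ x in E, (‖f x‖₊ : ENNReal) ∂volume ≤
      liminf (fun n => ∫⁻ x in E, ENNReal.ofReal (g n x) ∂volume) atTop :=
    le_trans (lintegral_mono_ae hpt) (lintegral_liminf_le hgmeas)
  -- uniform bound on the integrals of g n
  have hbound : ∀ n : ℕ, ∫⁻ x in E, ENNReal.ofReal (g n x) ∂volume ≤
      ENNReal.ofReal (3*M) + ENNReal.ofReal (2*C) := by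
    intro n
    set h : ℝ := 1/((n:ℝ)+1) with hh
    have hh0 : 0 < h := by positivity
    have hnh : ((n:ℝ)+1) * h = 1 := by rw [hh]; field_simp
    set A := E ∩ Iic (Mx - h) with hA
    have hAmeas : MeasurableSet A := hEm.inter measurableSet_Iic
    have hEsplit : E = A ∪ (E ∩ Ioi (Mx - h)) := by
      rw [hA, ← inter_union_distrib_left, Iic_union_Ioi, inter_univ]
    have hglob : ∀ x : ℝ, ENNReal.ofReal (g n x) ≤ ENNReal.ofReal (((n:ℝ)+1) * (2*C)) := by
      intro x
      apply ENNReal.ofReal_le_ofReal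
      rw [hgdef]
      simp only []
      apply mul_le_mul_of_nonneg_left ?_ (by positivity)
      calc |G (x + 1/((n:ℝ)+1)) - G x| ≤ |G (x + 1/((n:ℝ)+1))| + |G x| := abs_sub _ _
        _ ≤ C + C := add_le_add (hGb _) (hGb _)
        _ = 2*C := by ring
    have hpiece2 : ∫⁻ x in E ∩ Ioi (Mx - h), ENNReal.ofReal (g n x) ∂volume ≤
        ENNReal.ofReal (2*C) := by
      calc ∫⁻ x in E ∩ Ioi (Mx - h), ENNReal.ofReal (g n x) ∂volume
          ≤ ∫⁻ _x in E ∩ Ioi (Mx - h), ENNReal.ofReal (((n:ℝ)+1)*(2*C)) ∂volume :=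
            lintegral_mono fun x => hglob x
        _ = ENNReal.ofReal (((n:ℝ)+1)*(2*C)) * volume (E ∩ Ioi (Mx - h)) :=
            setLIntegral_const _ _
        _ ≤ ENNReal.ofReal (((n:ℝ)+1)*(2*C)) * ENNReal.ofReal h := by
            gcongr
            calc volume (E ∩ Ioi (Mx - h)) ≤ volume (Ioc (Mx - h) Mx) := by
                  apply measure_mono
                  rintro x ⟨hx1, hx2⟩
                  exact ⟨hx2, hxleM x hx1⟩
              _ = ENNReal.ofReal (Mx - (Mx - h)) := Real.volume_Ioc
              _ = ENNReal.ofReal h := by ring_nf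
        _ = ENNReal.ofReal (((n:ℝ)+1)*(2*C) * h) := by
            rw [← ENNReal.ofReal_mul (by positivity)]
        _ = ENNReal.ofReal (2*C) := by
            rw [show ((n:ℝ)+1)*(2*C)*h = 2*C*(((n:ℝ)+1)*h) by ring, hnh, mul_one]
    have hpiece1 : ∫⁻ x in A, ENNReal.ofReal (g n x) ∂volume ≤ ENNReal.ofReal (3*M) := by
      set P : ℕ → ℝ := fun j => sInf (E ∩ Ici (m + (j:ℝ)*h)) with hPdef
      set Q : ℕ → ℝ := fun j => if (E ∩ Ici (m + ((j:ℝ)+2)*h)).Nonempty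
        then sInf (E ∩ Ici (m + ((j:ℝ)+2)*h)) else Mx with hQdef
      set Jv : ℕ → Set ℝ := fun j => Ico (m + (j:ℝ)*h) (m + ((j:ℝ)+1)*h) with hJdef
      have hclosed : ∀ r : ℝ, IsClosed (E ∩ Ici r) := fun r => hEcl.inter isClosed_Ici
      have hbb : ∀ r : ℝ, BddBelow (E ∩ Ici r) := fun r => hbddb.mono inter_subset_left
      have hgood : ∀ j : ℕ, (A ∩ Jv j).Nonempty →
          P j ∈ E ∧ Q j ∈ E ∧ P j ≤ Q j ∧
          (∀ x ∈ A ∩ Jv j, P j ≤ x ∧ x + h ≤ Q j) := by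
        rintro j ⟨x0, hx0A, hx0J⟩
        have hne1 : (E ∩ Ici (m + (j:ℝ)*h)).Nonempty := ⟨x0, hx0A.1, hx0J.1⟩
        have hPmem : P j ∈ E ∩ Ici (m + (j:ℝ)*h) := (hclosed _).csInf_mem hne1 (hbb _)
        have hQmem : Q j ∈ E := by
          rw [hQdef]; dsimp only
          split_ifs with hq
          · exact ((hclosed _).csInf_mem hq (hbb _)).1
          · exact hMxE
        refine ⟨hPmem.1, hQmem, ?_, ?_⟩
        · rw [hQdef]; dsimp only
          split_ifs with hq
          · apply csInf_le_csInf (hbb _) hq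
            intro y hy
            exact ⟨hy.1, le_trans (show m + (j:ℝ)*h ≤ m + ((j:ℝ)+2)*h by nlinarith [hh0]) hy.2⟩
          · exact hxleM _ hPmem.1
        · intro x hx
          constructor
          · exact csInf_le (hbb _) ⟨hx.1.1, hx.2.1⟩
          · rw [hQdef]; dsimp only
            split_ifs with hq
            · apply le_csInf hq
              intro y hy
              have hy2 : m + ((j:ℝ)+2)*h ≤ y := hy.2
              have hxu : x < m + ((j:ℝ)+1)*h := hx.2.2
              nlinarith
            · have hxM : x ≤ Mx - h := mem_Iic.mp hx.1.2
              linarith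
      have hterm : ∀ j : ℕ, (A ∩ Jv j).Nonempty →
          ∫⁻ x in A ∩ Jv j, ENNReal.ofReal (g n x) ∂volume ≤
            ENNReal.ofReal (osc F (Icc (P j) (Q j))) := by
        intro j hj
        obtain ⟨hPE, hQE, hPQ, hxb⟩ := hgood j hj
        have hIccsub : Icc (P j) (Q j) ⊆ Icc a b := fun y hy =>
          ⟨le_trans (hEsub hPE).1 hy.1, le_trans hy.2 (hEsub hQE).2⟩
        have hoscnn : 0 ≤ osc F (Icc (P j) (Q j)) := osc_nonneg F _
        have hptb : ∀ x ∈ A ∩ Jv j, ENNReal.ofReal (g n x) ≤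
            ENNReal.ofReal (((n:ℝ)+1) * osc F (Icc (P j) (Q j))) := by
          intro x hx
          obtain ⟨hPx, hxQ⟩ := hxb x hx
          have hxI : x ∈ Icc (P j) (Q j) := ⟨hPx, by linarith⟩
          have hxhI : x + h ∈ Icc (P j) (Q j) := ⟨by linarith, hxQ⟩
          apply ENNReal.ofReal_le_ofReal
          rw [hgdef]; dsimp only
          rw [← hh]
          apply mul_le_mul_of_nonneg_left ?_ (by positivity)
          rw [hGF _ (hIccsub hxhI), hGF _ (hIccsub hxI)]
          exact abs_sub_le_osc hC' hIccsub hxhI hxI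
        calc ∫⁻ x in A ∩ Jv j, ENNReal.ofReal (g n x) ∂volume
            ≤ ∫⁻ _x in A ∩ Jv j, ENNReal.ofReal (((n:ℝ)+1) * osc F (Icc (P j) (Q j))) ∂volume :=
              setLIntegral_mono measurable_const hptb
          _ = ENNReal.ofReal (((n:ℝ)+1) * osc F (Icc (P j) (Q j))) * volume (A ∩ Jv j) :=
              setLIntegral_const _ _
          _ ≤ ENNReal.ofReal (((n:ℝ)+1) * osc F (Icc (P j) (Q j))) * ENNReal.ofReal h := by
              gcongr
              calc volume (A ∩ Jv j) ≤ volume (Jv j) := measure_mono inter_subset_right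
                _ = ENNReal.ofReal ((m + ((j:ℝ)+1)*h) - (m + (j:ℝ)*h)) := Real.volume_Ico
                _ = ENNReal.ofReal h := by ring_nf
          _ = ENNReal.ofReal (((n:ℝ)+1) * osc F (Icc (P j) (Q j)) * h) := by
              rw [← ENNReal.ofReal_mul (by positivity)]
          _ = ENNReal.ofReal (osc F (Icc (P j) (Q j))) := by
              rw [show ((n:ℝ)+1) * osc F (Icc (P j) (Q j)) * h
                  = osc F (Icc (P j) (Q j)) * (((n:ℝ)+1)*h) by ring, hnh, mul_one]
      have hQP : ∀ j k : ℕ, (A ∩ Jv k).Nonempty → j + 2 ≤ k → Q j ≤ P k := by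
        rintro j k ⟨xk, hxkA, hxkJ⟩ hjk
        have hknon : (E ∩ Ici (m + (k:ℝ)*h)).Nonempty := ⟨xk, hxkA.1, hxkJ.1⟩
        have hsub2 : E ∩ Ici (m + (k:ℝ)*h) ⊆ E ∩ Ici (m + ((j:ℝ)+2)*h) := by
          intro y hy
          refine ⟨hy.1, ?_⟩
          have hjk' : ((j:ℝ)+2) ≤ (k:ℝ) := by exact_mod_cast hjk
          have : m + ((j:ℝ)+2)*h ≤ m + (k:ℝ)*h := by nlinarith [hh0]
          exact le_trans this hy.2
        have hjnon : (E ∩ Ici (m + ((j:ℝ)+2)*h)).Nonempty := hknon.mono hsub2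
        rw [hQdef]; dsimp only
        rw [if_pos hjnon]
        exact csInf_le_csInf (hbb _) hknon hsub2
      set Nn : ℕ := ⌊(Mx - m)/h⌋₊ + 1 with hNn
      have hcoverA : A ⊆ ⋃ j : ℕ, (A ∩ Jv j) := by
        intro x hxA
        have hxE : x ∈ E := hxA.1
        have hmx : m ≤ x := hmle x hxE
        have h0d : 0 ≤ (x - m)/h := div_nonneg (by linarith) hh0.le
        refine mem_iUnion.mpr ⟨⌊(x - m)/h⌋₊, hxA, ?_, ?_⟩
        · have hfl : ((⌊(x - m)/h⌋₊ : ℝ)) ≤ (x - m)/h := Nat.floor_le h0d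
          have := (le_div_iff₀ hh0).mp hfl
          linarith
        · have hfu : (x - m)/h < (⌊(x - m)/h⌋₊ : ℝ) + 1 := Nat.lt_floor_add_one _
          have := (div_lt_iff₀ hh0).mp hfu
          linarith
      have hvanish : ∀ j : ℕ, j ∉ Finset.range Nn → (A ∩ Jv j) = ∅ := by
        intro j hj
        rw [eq_empty_iff_forall_notMem]
        rintro x ⟨⟨hxE, hxM⟩, hxJ⟩
        apply hj
        rw [Finset.mem_range, hNn]
        apply Nat.lt_succ_of_le
        apply Nat.le_floor
        rw [le_div_iff₀ hh0]
        have h1 := hxJ.1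
        have h2 := mem_Iic.mp hxM
        nlinarith [hh0, hxleM x hxE]
      calc ∫⁻ x in A, ENNReal.ofReal (g n x) ∂volume
          ≤ ∫⁻ x in ⋃ j : ℕ, (A ∩ Jv j), ENNReal.ofReal (g n x) ∂volume :=
            lintegral_mono_set hcoverA
        _ ≤ ∑' j : ℕ, ∫⁻ x in A ∩ Jv j, ENNReal.ofReal (g n x) ∂volume :=
            lintegral_iUnion_le _ _
        _ = ∑ j ∈ Finset.range Nn, ∫⁻ x in A ∩ Jv j, ENNReal.ofReal (g n x) ∂volume := by
            apply tsum_eq_sum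
            intro j hj
            rw [hvanish j hj]
            simp
        _ ≤ ENNReal.ofReal (3*M) := by
            rw [← Finset.sum_fiberwise_of_maps_to (g := fun j => j % 3) (t := Finset.range 3)
              (fun j _ => Finset.mem_range.mpr (Nat.mod_lt _ (by norm_num))) _]
            have hclass : ∀ r ∈ Finset.range 3,
                ∑ j ∈ (Finset.range Nn).filter (fun j => j % 3 = r),
                  ∫⁻ x in A ∩ Jv j, ENNReal.ofReal (g n x) ∂volume ≤ ENNReal.ofReal M := by
              intro r _
              set sr := ((Finset.range Nn).filter (fun j => j % 3 = r)).filter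
                (fun j => (A ∩ Jv j).Nonempty) with hsr
              have hsum0 : ∑ j ∈ (Finset.range Nn).filter (fun j => j % 3 = r),
                  (∫⁻ x in A ∩ Jv j, ENNReal.ofReal (g n x) ∂volume)
                  = ∑ j ∈ sr, ∫⁻ x in A ∩ Jv j, ENNReal.ofReal (g n x) ∂volume := by
                apply (Finset.sum_subset (Finset.filter_subset _ _) ?_).symm
                intro j hj hj'
                have hempty : A ∩ Jv j = ∅ := by
                  by_contra hne3
                  exact hj' (Finset.mem_filter.mpr ⟨hj, nonempty_iff_ne_empty.mpr hne3⟩)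
                rw [hempty]
                simp
              rw [hsum0]
              calc ∑ j ∈ sr, ∫⁻ x in A ∩ Jv j, ENNReal.ofReal (g n x) ∂volume
                  ≤ ∑ j ∈ sr, ENNReal.ofReal (osc F (Icc (P j) (Q j))) :=
                    Finset.sum_le_sum fun j hj => hterm j (Finset.mem_filter.mp hj).2
                _ = ENNReal.ofReal (∑ j ∈ sr, osc F (Icc (P j) (Q j))) :=
                    (ENNReal.ofReal_sum_of_nonneg fun j _ => osc_nonneg F _).symm
                _ ≤ ENNReal.ofReal M := by
                    apply ENNReal.ofReal_le_ofReal
                    apply sum_osc_le_of_family hM0 hM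
                    · intro j hj
                      have hjne := (Finset.mem_filter.mp hj).2
                      obtain ⟨hPE, hQE, hPQ, _⟩ := hgood j hjne
                      exact ⟨hPQ, hPE, hQE, fun y hy =>
                        ⟨le_trans (hEsub hPE).1 hy.1, le_trans hy.2 (hEsub hQE).2⟩⟩
                    · intro j hj k hk hjk
                      have hjr := (Finset.mem_filter.mp ((Finset.mem_filter.mp hj).1)).2
                      have hkr := (Finset.mem_filter.mp ((Finset.mem_filter.mp hk).1)).2
                      have hjne := (Finset.mem_filter.mp hj).2
                      have hkne := (Finset.mem_filter.mp hk).2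
                      rcases lt_or_gt_of_ne hjk with hlt | hlt
                      · exact Or.inl (hQP j k hkne (by omega))
                      · exact Or.inr (hQP k j hjne (by omega))
            calc ∑ r ∈ Finset.range 3, ∑ j ∈ (Finset.range Nn).filter (fun j => j % 3 = r),
                  ∫⁻ x in A ∩ Jv j, ENNReal.ofReal (g n x) ∂volume
                ≤ ∑ _r ∈ Finset.range 3, ENNReal.ofReal M := Finset.sum_le_sum hclass
              _ = 3 * ENNReal.ofReal M := by
                  rw [Finset.sum_const, Finset.card_range]
                  simp [mul_comm]
              _ = ENNReal.ofReal (3*M) := by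
                  rw [ENNReal.ofReal_mul (by norm_num)]
                  norm_num
    have hdisj : Disjoint A (E ∩ Ioi (Mx - h)) := by
      rw [Set.disjoint_left]
      rintro x ⟨_, hx2⟩ ⟨_, hx3⟩
      exact absurd (mem_Iic.mp hx2) (not_le.mpr (mem_Ioi.mp hx3))
    calc ∫⁻ x in E, ENNReal.ofReal (g n x) ∂volume
        = ∫⁻ x in A ∪ (E ∩ Ioi (Mx - h)), ENNReal.ofReal (g n x) ∂volume := by
          rw [← hEsplit]
      _ = (∫⁻ x in A, ENNReal.ofReal (g n x) ∂volume) +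
          ∫⁻ x in E ∩ Ioi (Mx - h), ENNReal.ofReal (g n x) ∂volume :=
          lintegral_union (hEm.inter measurableSet_Ioi) hdisj
      _ ≤ ENNReal.ofReal (3*M) + ENNReal.ofReal (2*C) := add_le_add hpiece1 hpiece2
  refine ⟨hfm, ?_⟩
  have hlim : liminf (fun n => ∫⁻ x in E, ENNReal.ofReal (g n x) ∂volume) atTop ≤
      ENNReal.ofReal (3*M) + ENNReal.ofReal (2*C) :=
    liminf_le_of_frequently_le' (Frequently.of_forall hbound)
  exact lt_of_le_of_lt (hfatou.trans hlim)
    (ENNReal.add_lt_top.mpr ⟨ENNReal.ofReal_lt_top, ENNReal.ofReal_lt_top⟩)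

lemma derivIter_zero (D : Set ℝ → Set ℝ) (K : Set ℝ) : derivIter D K 0 = K :=
  Ordinal.limitRecOn_zero _ _ _

lemma derivIter_succ (D : Set ℝ → Set ℝ) (K : Set ℝ) (α : Ordinal.{0}) :
    derivIter D K (Order.succ α) = D (derivIter D K α) :=
  Ordinal.limitRecOn_succ _ _ _ _

lemma derivIter_limit (D : Set ℝ → Set ℝ) (K : Set ℝ) {α : Ordinal.{0}} (hα : Order.IsSuccLimit α) :
    derivIter D K α = ⋂ β : Iio α, derivIter D K β.1 :=
  Ordinal.limitRecOn_limit _ _ _ _ hα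

lemma derivIter_subset (D : Set ℝ → Set ℝ) (hD : ∀ L, D L ⊆ L) (K : Set ℝ)
    {β α : Ordinal.{0}} (hβα : β ≤ α) : derivIter D K α ⊆ derivIter D K β := by
  induction α using Ordinal.induction with
  | h α IH =>
    rcases eq_or_lt_of_le hβα with rfl | hlt
    · exact subset_rfl
    rcases Ordinal.zero_or_succ_or_isSuccLimit α with h0 | ⟨γ, rfl⟩ | hlim
    · exact absurd h0 (by rintro rfl; exact (not_lt_zero (a := β)) hlt)
    · have hβγ : β ≤ γ := Order.le_of_lt_succ hlt
      rw [derivIter_succ]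
      exact (hD _).trans (IH γ (Order.lt_succ γ) hβγ)
    · rw [derivIter_limit D K hlim]
      exact iInter_subset_of_subset ⟨β, hlt⟩ subset_rfl

lemma derivIter_closed (D : Set ℝ → Set ℝ) (hD : ∀ L, IsClosed L → IsClosed (D L))
    (K : Set ℝ) (hK : IsClosed K) (α : Ordinal.{0}) : IsClosed (derivIter D K α) := by
  induction α using Ordinal.induction with
  | h α IH =>
    rcases Ordinal.zero_or_succ_or_isSuccLimit α with rfl | ⟨γ, rfl⟩ | hlim
    · rw [derivIter_zero]; exact hK
    · rw [derivIter_succ]; exact hD _ (IH γ (Order.lt_succ γ))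
    · rw [derivIter_limit D K hlim]
      exact isClosed_iInter fun β => IH β.1 β.2

lemma derivIter_subset_base (D : Set ℝ → Set ℝ) (hD : ∀ L, D L ⊆ L) (K : Set ℝ)
    (α : Ordinal.{0}) : derivIter D K α ⊆ K := by
  have := derivIter_subset D hD K (zero_le : (0:Ordinal.{0}) ≤ α)
  rwa [derivIter_zero] at this

lemma derivInfty_empty_abstract {a b : ℝ} (D : Set ℝ → Set ℝ)
    (hD1 : ∀ L, D L ⊆ L)
    (hD2 : ∀ L, IsClosed L → IsClosed (D L))
    (hD3 : ∀ L, IsClosed L → L ⊆ Icc a b → L.Nonempty → ∃ x ∈ L, x ∉ D L)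
    (K : Set ℝ) (hK : IsClosed K) (hKsub : K ⊆ Icc a b) :
    derivInfty D K = ∅ := by
  classical
  by_contra hne
  obtain ⟨x₀, hx₀⟩ := nonempty_iff_ne_empty.mpr hne
  -- every countable iterate is nonempty
  have hne' : ∀ α : Ordinal.{0}, α.card ≤ Cardinal.aleph0 → (derivIter D K α).Nonempty := by
    intro α hα
    refine ⟨x₀, ?_⟩
    have := mem_iInter.mp hx₀ α
    exact mem_iInter.mp this hα
  -- choose witnesses and rational intervals
  have hwit : ∀ α : Ordinal.{0}, α.card ≤ Cardinal.aleph0 →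
      ∃ q : ℚ × ℚ, (∃ x ∈ derivIter D K α, x ∉ derivIter D K (Order.succ α) ∧
        x ∈ Ioo (q.1 : ℝ) (q.2 : ℝ)) ∧
        Ioo (q.1 : ℝ) (q.2 : ℝ) ∩ derivIter D K (Order.succ α) = ∅ := by
    intro α hα
    obtain ⟨x, hxmem, hxnot⟩ := hD3 (derivIter D K α) (derivIter_closed D hD2 K hK α)
      ((derivIter_subset_base D hD1 K α).trans hKsub) (hne' α hα)
    have hxnot' : x ∉ derivIter D K (Order.succ α) := by
      rw [derivIter_succ]; exact hxnot
    have hopen : IsOpen (derivIter D K (Order.succ α))ᶜ :=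
      (derivIter_closed D hD2 K hK _).isOpen_compl
    obtain ⟨ε, hε, hball⟩ := Metric.isOpen_iff.mp hopen x hxnot'
    obtain ⟨q1, hq1⟩ := exists_rat_btwn (show x - ε < x by linarith)
    obtain ⟨q2, hq2⟩ := exists_rat_btwn (show x < x + ε by linarith)
    refine ⟨(q1, q2), ⟨x, hxmem, hxnot', hq1.2, hq2.1⟩, ?_⟩
    rw [eq_empty_iff_forall_notMem]
    rintro y ⟨⟨hy1, hy2⟩, hy3⟩
    refine hball ?_ hy3
    rw [Metric.mem_ball, Real.dist_eq, abs_lt]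
    constructor <;> [linarith; linarith]
  -- build the injection
  set S := {α : Ordinal.{0} // α.card ≤ Cardinal.aleph0} with hS
  have : ∃ Φ : S → ℚ × ℚ, Function.Injective Φ := by
    refine ⟨fun α => (hwit α.1 α.2).choose, ?_⟩
    intro α β hαβ
    have hqeq : (hwit α.1 α.2).choose = (hwit β.1 β.2).choose := hαβ
    by_contra hnesub
    have hne2 : α.1 ≠ β.1 := fun h => hnesub (Subtype.ext h)
    -- wlog α < β
    rcases lt_or_gt_of_ne hne2 with hlt | hlt
    · obtain ⟨⟨xα, hxα1, hxα2, hxα3⟩, hαe⟩ := (hwit α.1 α.2).choose_spec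
      obtain ⟨⟨xβ, hxβ1, hxβ2, hxβ3⟩, hβe⟩ := (hwit β.1 β.2).choose_spec
      have hsub : derivIter D K β.1 ⊆ derivIter D K (Order.succ α.1) :=
        derivIter_subset D hD1 K (Order.succ_le_of_lt hlt)
      have hxβmem : xβ ∈ derivIter D K (Order.succ α.1) := hsub hxβ1
      have : xβ ∈ Ioo ((hwit α.1 α.2).choose.1 : ℝ) ((hwit α.1 α.2).choose.2 : ℝ) := by
        rw [hqeq]; exact hxβ3
      exact eq_empty_iff_forall_notMem.mp hαe xβ ⟨this, hxβmem⟩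
    · obtain ⟨⟨xα, hxα1, hxα2, hxα3⟩, hαe⟩ := (hwit α.1 α.2).choose_spec
      obtain ⟨⟨xβ, hxβ1, hxβ2, hxβ3⟩, hβe⟩ := (hwit β.1 β.2).choose_spec
      have hsub : derivIter D K α.1 ⊆ derivIter D K (Order.succ β.1) :=
        derivIter_subset D hD1 K (Order.succ_le_of_lt hlt)
      have hxαmem : xα ∈ derivIter D K (Order.succ β.1) := hsub hxα1
      have : xα ∈ Ioo ((hwit β.1 β.2).choose.1 : ℝ) ((hwit β.1 β.2).choose.2 : ℝ) := by
        rw [← hqeq]; exact hxα3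
      exact eq_empty_iff_forall_notMem.mp hβe xα ⟨this, hxαmem⟩
  obtain ⟨Φ, hΦ⟩ := this
  -- cardinality contradiction
  have hScount : Countable S := hΦ.countable
  have hIioCount : Countable (Iio ((Cardinal.aleph 1).ord)) := by
    refine Countable.of_equiv S ?_
    apply Equiv.subtypeEquivRight
    intro α
    rw [mem_Iio, Cardinal.lt_ord, ← Cardinal.succ_aleph0, Order.lt_succ_iff]
  have h1 : Cardinal.mk (↑(Iio ((Cardinal.aleph 1).ord))) ≤ Cardinal.aleph0 :=
    Cardinal.mk_le_aleph0_iff.mpr hIioCount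
  rw [Ordinal.mk_Iio_ordinal, Cardinal.card_ord] at h1
  rw [← Cardinal.lift_aleph0.{1,0}] at h1
  exact absurd (Cardinal.lift_le.mp h1) (not_le.mpr Cardinal.aleph0_lt_aleph_one)

-- subset monotonicity of ACStar
lemma ACStar.mono {a b : ℝ} {F : ℝ → ℝ} {K K' : Set ℝ} (hAC : ACStar a b F K)
    (hsub : K' ⊆ K) : ACStar a b F K' := by
  intro ε hε
  obtain ⟨δ, hδ, hδ1⟩ := hAC ε hε
  refine ⟨δ, hδ, ?_⟩
  intro D hD hlen
  refine hδ1 D ⟨hD.1, fun p hp => ?_, hD.2.2⟩ hlen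
  obtain ⟨h1, h2, h3, h4⟩ := hD.2.1 p hp
  exact ⟨h1, hsub h2, hsub h3, h4⟩

-- Df preserves closedness
lemma Df_subset (f : ℝ → ℝ) (K : Set ℝ) : Df f K ⊆ K := fun _ hx => hx.1

lemma DF_subset (a b : ℝ) (F : ℝ → ℝ) (K : Set ℝ) : DF a b F K ⊆ K := fun _ hx => hx.1

lemma DfF_subset (a b : ℝ) (f F : ℝ → ℝ) (K : Set ℝ) : DfF a b f F K ⊆ K := by
  rintro x (hx | hx)
  · exact hx.1
  · exact hx.1

lemma Df_closed (f : ℝ → ℝ) (K : Set ℝ) (hK : IsClosed K) : IsClosed (Df f K) := by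
  have : Df f K = K ∩ {x : ℝ | ∃ c d : ℝ, c < x ∧ x < d ∧
      IntegrableOn f (Icc c d ∩ K) volume}ᶜ := by
    ext x
    simp only [Df, mem_inter_iff, mem_setOf_eq, mem_compl_iff, not_exists, not_and, Set.mem_sep_iff]
  rw [this]
  apply hK.inter
  apply isClosed_compl_iff.mpr
  rw [isOpen_iff_mem_nhds]
  rintro x ⟨c, d, hc, hd, hint⟩
  rw [mem_nhds_iff]
  exact ⟨Ioo c d, fun y hy => ⟨c, d, hy.1, hy.2, hint⟩, isOpen_Ioo, hc, hd⟩

lemma DF_closed (a b : ℝ) (F : ℝ → ℝ) (K : Set ℝ) (hK : IsClosed K) :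
    IsClosed (DF a b F K) := by
  have : DF a b F K = K ∩ {x : ℝ | ∃ c d : ℝ, c < x ∧ x < d ∧
      ACStar a b F (Icc c d ∩ K)}ᶜ := by
    ext x
    simp only [DF, mem_inter_iff, mem_setOf_eq, mem_compl_iff, not_exists, not_and, Set.mem_sep_iff]
  rw [this]
  apply hK.inter
  apply isClosed_compl_iff.mpr
  rw [isOpen_iff_mem_nhds]
  rintro x ⟨c, d, hc, hd, hint⟩
  rw [mem_nhds_iff]
  exact ⟨Ioo c d, fun y hy => ⟨c, d, hy.1, hy.2, hint⟩, isOpen_Ioo, hc, hd⟩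

lemma DfF_closed (a b : ℝ) (f F : ℝ → ℝ) (K : Set ℝ) (hK : IsClosed K) :
    IsClosed (DfF a b f F K) :=
  (Df_closed f K hK).union (DF_closed a b F K hK)

-- the Baire category portion lemma
lemma exists_portion {a b : ℝ} (hab : a ≤ b) {f F : ℝ → ℝ}
    (hF : HasDenjoyIntegralFn a b f F)
    {K : Set ℝ} (hK : IsClosed K) (hKne : K.Nonempty) (hKsub : K ⊆ Icc a b) :
    ∃ x ∈ K, ∃ c d : ℝ, c < x ∧ x < d ∧ ACStar a b F (Icc c d ∩ K) ∧
      IntegrableOn f (Icc c d ∩ K) volume := by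
  classical
  obtain ⟨hFc, _, ⟨CC, hCC, hCCU⟩, hderiv⟩ := hF
  -- Baire category in the subtype
  haveI : Nonempty K := hKne.to_subtype
  haveI : CompleteSpace K := hK.completeSpace_coe
  have hcl : ∀ n : ℕ, IsClosed ((fun y : K => (y : ℝ)) ⁻¹' (CC n)) := fun n =>
    (hCC n).1.preimage continuous_subtype_val
  have hU : ⋃ n, (fun y : K => (y : ℝ)) ⁻¹' (CC n) = univ := by
    rw [eq_univ_iff_forall]
    intro y
    have : (y : ℝ) ∈ Icc a b := hKsub y.2
    rw [hCCU] at this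
    obtain ⟨s, ⟨n, rfl⟩, hs⟩ := this
    exact mem_iUnion.mpr ⟨n, hs⟩
  obtain ⟨n, hn⟩ := nonempty_interior_of_iUnion_of_closed hcl hU
  obtain ⟨x, hx⟩ := hn
  rw [mem_interior] at hx
  obtain ⟨t, hts, htopen, hxt⟩ := hx
  obtain ⟨V, hVopen, hVt⟩ := isOpen_induced_iff.mp htopen
  have hxV : (x : ℝ) ∈ V := by
    have : x ∈ (fun y : K => (y : ℝ)) ⁻¹' V := by rw [hVt]; exact hxt
    exact this
  obtain ⟨ε, hε, hball⟩ := Metric.isOpen_iff.mp hVopen x hxV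
  obtain ⟨c, d, hcx, hxd, hcd⟩ : ∃ c d : ℝ, c < ↑x ∧ ↑x < d ∧
      Icc c d ⊆ Metric.ball (x:ℝ) ε :=
    ⟨(x:ℝ) - ε/2, (x:ℝ) + ε/2, by linarith, by linarith, by
      intro y hy
      rw [Metric.mem_ball, Real.dist_eq, abs_lt]
      obtain ⟨h1, h2⟩ := hy
      constructor <;> linarith⟩
  have hsub : Icc c d ∩ K ⊆ CC n := by
    rintro y ⟨hy1, hy2⟩
    have hyV : y ∈ V := hball (hcd hy1)
    have hmem : (⟨y, hy2⟩ : K) ∈ t := by rw [← hVt]; exact hyV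
    exact hts hmem
  have hEclosed : IsClosed (Icc c d ∩ K) := isClosed_Icc.inter hK
  have hEne : (Icc c d ∩ K).Nonempty := ⟨x, ⟨le_of_lt hcx, le_of_lt hxd⟩, x.2⟩
  have hEsub : Icc c d ∩ K ⊆ Icc a b := fun y hy => hKsub hy.2
  have hAC : ACStar a b F (Icc c d ∩ K) := ((hCC n).2.2).mono hsub
  refine ⟨x, x.2, c, d, hcx, hxd, hAC, ?_⟩
  apply integrableOn_of_acstar hab hFc hEclosed hEne hEsub hAC
  exact ae_restrict_of_ae_restrict_of_subset hEsub hderiv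

/-- For `f ∈ Den[a,b]` with indefinite integral `F`, all three derivatives of any closed
`K ⊆ [a,b]` eventually vanish. -/
theorem derivInfty_empty_of_denjoy (a b : ℝ) (hab : a < b) (f F : ℝ → ℝ)
    (hF : HasDenjoyIntegralFn a b f F)
    (K : Set ℝ) (hK : IsClosed K) (hKsub : K ⊆ Icc a b) :
    derivInfty (Df f) K = ∅ ∧ derivInfty (DF a b F) K = ∅ ∧
    derivInfty (DfF a b f F) K = ∅ := by
  have hab' : a ≤ b := le_of_lt hab
  have hP3 : ∀ L : Set ℝ, IsClosed L → L ⊆ Icc a b → L.Nonempty →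
      ∃ x ∈ L, x ∉ Df f L ∧ x ∉ DF a b F L := by
    intro L hL hLsub hLne
    obtain ⟨x, hxL, c, d, hcx, hxd, hACp, hInt⟩ := exists_portion hab' hF hL hLne hLsub
    refine ⟨x, hxL, ?_, ?_⟩
    · intro hx; exact hx.2 c d hcx hxd hInt
    · intro hx; exact hx.2 c d hcx hxd hACp
  refine ⟨?_, ?_, ?_⟩
  · exact derivInfty_empty_abstract (a := a) (b := b) (Df f)
      (fun L => Df_subset f L) (fun L hL => Df_closed f L hL)
      (fun L hL hs hne => (hP3 L hL hs hne).imp (fun x hx => ⟨hx.1, hx.2.1⟩))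
      K hK hKsub
  · exact derivInfty_empty_abstract (a := a) (b := b) (DF a b F)
      (fun L => DF_subset a b F L) (fun L hL => DF_closed a b F L hL)
      (fun L hL hs hne => (hP3 L hL hs hne).imp (fun x hx => ⟨hx.1, hx.2.2⟩))
      K hK hKsub
  · refine derivInfty_empty_abstract (a := a) (b := b) (DfF a b f F)
      (fun L => DfF_subset a b f F L) (fun L hL => DfF_closed a b f F L hL)
      ?_ K hK hKsub
    intro L hL hs hne
    obtain ⟨x, hxL, hx1, hx2⟩ := hP3 L hL hs hne
    refine ⟨x, hxL, ?_⟩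
    rintro (h | h)
    · exact hx1 h
    · exact hx2 h
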